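/- Let B_q^J(𝔤) be the hybrid q-Boson algebra of a subset J ⊆ I. There is a ℚ(q)-algebra anti-involution φ of B_q^J(𝔤) with φ(f_i) = e_i and φ(e_i) = f_i for i ∈ I∖J, φ(f_i) = e_it_i and φ(e_i) = t_i^{-1}f_i for i ∈ J, and φ(q^h) = q^h. -/
import Mathlib


noncomputable section

open scoped TensorProduct

/-- The field `ℚ(q)` of rational functions. -/
abbrev KK : Type := RatFunc ℚ

/-- The indeterminate `q ∈ ℚ(q)`. -/
def qq : KK := RatFunc.X

/-- `q^m` for `m ∈ ℤ`. -/
def qpow (m : ℤ) : KK := qq ^ m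

/-- The quantum integer `[n]_i = (q_i^n - q_i^{-n})/(q_i - q_i^{-1})` where `q_i = q^d`. -/
def qint (d n : ℤ) : KK := (qpow (d * n) - qpow (-(d * n))) / (qpow d - qpow (-d))

/-- The quantum factorial `[n]_i!`. -/
def qfact (d : ℤ) : ℕ → KK
  | 0 => 1
  | n + 1 => qfact d n * qint d (n + 1)

/-- A symmetrizable generalized Cartan matrix `a` with symmetrizers `d i`, so that
`(α_i, α_j) = d i * a i j`. -/
structure CartanData (I : Type) : Type where
  a : I → I → ℤ
  d : I → ℤ
  d_pos : ∀ i, 0 < d i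
  a_diag : ∀ i, a i i = 2
  a_offdiag : ∀ i j, i ≠ j → a i j ≤ 0
  symm : ∀ i j, d i * a i j = d j * a j i

/-- Generators of the quantum group `U_q(𝔤)` (adjoint form: `t i = q^{(α_i,α_i)/2 · h_i}`). -/
inductive QGen (I : Type) : Type
  | e : I → QGen I
  | f : I → QGen I
  | t : I → QGen I
  | tinv : I → QGen I

variable {I : Type}

/-- The free algebra on the generators of `U_q(𝔤)`. -/
abbrev FA (I : Type) : Type := FreeAlgebra KK (QGen I)

def ge (i : I) : FA I := FreeAlgebra.ι KK (QGen.e i)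
def gf (i : I) : FA I := FreeAlgebra.ι KK (QGen.f i)
def gT (i : I) : FA I := FreeAlgebra.ι KK (QGen.t i)
def gTinv (i : I) : FA I := FreeAlgebra.ι KK (QGen.tinv i)

/-- Divided power `e_i^{(s)}` in the free algebra. -/
def edp (C : CartanData I) (i : I) (s : ℕ) : FA I := (qfact (C.d i) s)⁻¹ • ge i ^ s

/-- Divided power `f_i^{(s)}` in the free algebra. -/
def fdp (C : CartanData I) (i : I) (s : ℕ) : FA I := (qfact (C.d i) s)⁻¹ • gf i ^ s

/-- The quantum Serre element `Σ_{s} (-1)^s e_i^{(s)} e_j e_i^{(1-a_{ij}-s)}`. -/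
def serreE (C : CartanData I) (i j : I) : FA I :=
  ∑ s ∈ Finset.range ((1 - C.a i j).toNat + 1),
    ((-1 : KK) ^ s) • (edp C i s * ge j * edp C i ((1 - C.a i j).toNat - s))

/-- The quantum Serre element `Σ_{s} (-1)^s f_i^{(s)} f_j f_i^{(1-a_{ij}-s)}`. -/
def serreF (C : CartanData I) (i j : I) : FA I :=
  ∑ s ∈ Finset.range ((1 - C.a i j).toNat + 1),
    ((-1 : KK) ^ s) • (fdp C i s * gf j * fdp C i ((1 - C.a i j).toNat - s))

/-- The defining relations of the quantum group `U_q(𝔤)`. -/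
inductive QRel [DecidableEq I] (C : CartanData I) : FA I → FA I → Prop
  | t_tinv (i : I) : QRel C (gT i * gTinv i) 1
  | tinv_t (i : I) : QRel C (gTinv i * gT i) 1
  | t_t (i j : I) : QRel C (gT i * gT j) (gT j * gT i)
  | t_tinv_comm (i j : I) : QRel C (gT i * gTinv j) (gTinv j * gT i)
  | t_e (i j : I) : QRel C (gT i * ge j) (qpow (C.d i * C.a i j) • (ge j * gT i))
  | t_f (i j : I) : QRel C (gT i * gf j) (qpow (-(C.d i * C.a i j)) • (gf j * gT i))
  | e_f (i j : I) :
      QRel C (ge i * gf j - gf j * ge i)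
        (if i = j then (qpow (C.d i) - qpow (-C.d i))⁻¹ • (gT i - gTinv i) else 0)
  | serre_e (i j : I) : i ≠ j → QRel C (serreE C i j) 0
  | serre_f (i j : I) : i ≠ j → QRel C (serreF C i j) 0

/-- The quantum group `U_q(𝔤)`, presented by generators and relations. -/
abbrev Uq [DecidableEq I] (C : CartanData I) : Type := RingQuot (QRel C)

variable [DecidableEq I]

/-- The canonical map from the free algebra onto `U_q(𝔤)`. -/
def uMk (C : CartanData I) : FA I →ₐ[KK] Uq C := RingQuot.mkAlgHom KK (QRel C)

def uE (C : CartanData I) (i : I) : Uq C := uMk C (ge i)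
def uF (C : CartanData I) (i : I) : Uq C := uMk C (gf i)
def uT (C : CartanData I) (i : I) : Uq C := uMk C (gT i)
def uTinv (C : CartanData I) (i : I) : Uq C := uMk C (gTinv i)

/-- Divided power `e_i^{(s)} ∈ U_q(𝔤)`. -/
def uEdp (C : CartanData I) (i : I) (s : ℕ) : Uq C := (qfact (C.d i) s)⁻¹ • uE C i ^ s

/-- Divided power `f_i^{(s)} ∈ U_q(𝔤)`. -/
def uFdp (C : CartanData I) (i : I) (s : ℕ) : Uq C := (qfact (C.d i) s)⁻¹ • uF C i ^ s

/-- The negative half `U_q^-(𝔤)`, the subalgebra generated by the `f_i`. -/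
def Uneg (C : CartanData I) : Subalgebra KK (Uq C) :=
  Algebra.adjoin KK (Set.range (uF C))

/-- The weight `-β` component of `U_q^-(𝔤)` (spanned by monomials in the `f_i` of
content `β ∈ Q_+`). -/
def negWt (C : CartanData I) (β : I →₀ ℕ) : Submodule KK (Uq C) :=
  Submodule.span KK
    {u | ∃ w : List I, (∀ j, w.count j = β j) ∧ u = (w.map (uF C)).prod}

/-- The pairing `(α_i, β) = Σ_j β_j (α_i, α_j)` for `β ∈ Q_+`. -/
def pairB (C : CartanData I) (i : I) (β : I →₀ ℕ) : ℤ :=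
  β.sum fun j m => C.d i * C.a i j * (m : ℤ)

/-- `f_j` as an element of the subalgebra `U_q^-(𝔤)`. -/
def uFneg (C : CartanData I) (j : I) : ↥(Uneg C) :=
  ⟨uF C j, Algebra.subset_adjoin ⟨j, rfl⟩⟩

/-- `t_i^m` for `m ∈ ℤ`. -/
def tpow (C : CartanData I) (i : I) (m : ℤ) : Uq C :=
  if 0 ≤ m then uT C i ^ m.toNat else uTinv C i ^ (-m).toNat


/-- The modified quantum Serre element `e_{i,j}` of the hybrid `q`-Boson algebra
`B_q^J(𝔤)`, carrying extra powers of `q_i` depending on whether `i, j` lie in `J`. -/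
def serreEB (C : CartanData I) (J : Set I) [DecidablePred (· ∈ J)] (i j : I) : FA I :=
  ∑ s ∈ Finset.range ((1 - C.a i j).toNat + 1),
    ((-1 : KK) ^ s *
        qpow (C.d i *
          (if i ∉ J ∧ j ∈ J then (1 - C.a i j - (s : ℤ)) * C.a i j
           else if i ∈ J ∧ j ∉ J then (s : ℤ) * C.a i j
           else 0))) •
      (edp C i s * ge j * edp C i ((1 - C.a i j).toNat - s))

/-- The defining relations of the hybrid `q`-Boson algebra `B_q^J(𝔤)`. -/
inductive BRel [DecidableEq I] (C : CartanData I) (J : Set I) [DecidablePred (· ∈ J)] :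
    FA I → FA I → Prop
  | t_tinv (i : I) : BRel C J (gT i * gTinv i) 1
  | tinv_t (i : I) : BRel C J (gTinv i * gT i) 1
  | t_t (i j : I) : BRel C J (gT i * gT j) (gT j * gT i)
  | t_tinv_comm (i j : I) : BRel C J (gT i * gTinv j) (gTinv j * gT i)
  | t_e (i j : I) : BRel C J (gT i * ge j) (qpow (C.d i * C.a i j) • (ge j * gT i))
  | t_f (i j : I) : BRel C J (gT i * gf j) (qpow (-(C.d i * C.a i j)) • (gf j * gT i))
  | e_f_mem (i j : I) : i ∈ J →
      BRel C J (ge i * gf j - gf j * ge i)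
        (if i = j then (qpow (C.d i) - qpow (-C.d i))⁻¹ • (gT i - gTinv i) else 0)
  | e_f_not (i j : I) : i ∉ J →
      BRel C J (ge i * gf j)
        (qpow (-(C.d i * C.a i j)) • (gf j * ge i) + (if i = j then 1 else 0))
  | serre_f (i j : I) : i ≠ j → BRel C J (serreF C i j) 0
  | serre_e (i j : I) : i ≠ j → BRel C J (serreEB C J i j) 0

/-- The hybrid `q`-Boson algebra `B_q^J(𝔤)`, presented by generators and relations. -/
abbrev BqJ [DecidableEq I] (C : CartanData I) (J : Set I) [DecidablePred (· ∈ J)] : Type :=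
  RingQuot (BRel C J)

def bMk (C : CartanData I) (J : Set I) [DecidablePred (· ∈ J)] : FA I →ₐ[KK] BqJ C J :=
  RingQuot.mkAlgHom KK (BRel C J)

def bE (C : CartanData I) (J : Set I) [DecidablePred (· ∈ J)] (i : I) : BqJ C J :=
  bMk C J (ge i)
def bF (C : CartanData I) (J : Set I) [DecidablePred (· ∈ J)] (i : I) : BqJ C J :=
  bMk C J (gf i)
def bT (C : CartanData I) (J : Set I) [DecidablePred (· ∈ J)] (i : I) : BqJ C J :=
  bMk C J (gT i)
def bTinv (C : CartanData I) (J : Set I) [DecidablePred (· ∈ J)] (i : I) : BqJ C J :=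
  bMk C J (gTinv i)


/-! ### Auxiliary lemmas for the anti-involution -/

lemma qq_ne_zero : qq ≠ 0 := RatFunc.X_ne_zero

lemma qpow_zero' : qpow 0 = 1 := by simp [qpow]

lemma qpow_add' (a b : ℤ) : qpow (a + b) = qpow a * qpow b :=
  zpow_add₀ qq_ne_zero a b

section Generic

variable {A : Type} [Ring A] [Algebra KK A]

/-- flip a q-commutation relation -/
lemma flip_comm {x y : A} {m : ℤ} (h : x * y = qpow m • (y * x)) :
    y * x = qpow (-m) • (x * y) := by
  rw [h, smul_smul, ← qpow_add', neg_add_cancel, qpow_zero', one_smul]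

lemma conj_comm {u v x : A} (huv : u * v = 1) (hvu : v * u = 1) {c : KK}
    (h : u * x = c • (x * u)) : x * v = c • (v * x) := by
  calc x * v = (v * u) * (x * v) := by rw [hvu, one_mul]
    _ = v * (u * x) * v := by noncomm_ring
    _ = v * (c • (x * u)) * v := by rw [h]
    _ = c • (v * (x * (u * v))) := by
          rw [mul_smul_comm, smul_mul_assoc]; congr 1; noncomm_ring
    _ = c • (v * x) := by rw [huv, mul_one]

lemma comm_pow_left {x y : A} {m : ℤ} (h : x * y = qpow m • (y * x)) (s : ℕ) :
    x ^ s * y = qpow (s * m) • (y * x ^ s) := by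
  induction s with
  | zero => simp [qpow_zero']
  | succ n ih =>
    calc x ^ (n + 1) * y = x ^ n * (x * y) := by rw [pow_succ, mul_assoc]
      _ = qpow m • (x ^ n * (y * x)) := by rw [h, mul_smul_comm]
      _ = qpow m • ((x ^ n * y) * x) := by rw [mul_assoc]
      _ = qpow m • ((qpow (n * m) • (y * x ^ n)) * x) := by rw [ih]
      _ = (qpow m * qpow (n * m)) • (y * (x ^ n * x)) := by
            rw [smul_mul_assoc, smul_smul, mul_assoc]
      _ = qpow ((n + 1 : ℕ) * m) • (y * x ^ (n + 1)) := by
            rw [← pow_succ, ← qpow_add']; congr 2; push_cast; ring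

lemma comm_pow {x y : A} {m : ℤ} (h : x * y = qpow m • (y * x)) (s t : ℕ) :
    x ^ s * y ^ t = qpow (s * t * m) • (y ^ t * x ^ s) := by
  have h2 : x * y ^ t = qpow (t * m) • (y ^ t * x) := by
    induction t with
    | zero => simp [qpow_zero']
    | succ n ih =>
      calc x * y ^ (n + 1) = (x * y ^ n) * y := by rw [pow_succ, mul_assoc]
        _ = (qpow (n * m) • (y ^ n * x)) * y := by rw [ih]
        _ = qpow (n * m) • (y ^ n * (x * y)) := by rw [smul_mul_assoc, mul_assoc]
        _ = qpow (n * m) • (y ^ n * (qpow m • (y * x))) := by rw [h]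
        _ = (qpow (n * m) * qpow m) • ((y ^ n * y) * x) := by
              rw [mul_smul_comm, smul_smul, mul_assoc]
        _ = qpow ((n + 1 : ℕ) * m) • (y ^ (n + 1) * x) := by
              rw [← pow_succ, ← qpow_add']; congr 2; push_cast; ring
  rw [comm_pow_left h2 s]
  congr 2
  push_cast; ring

lemma prod_pow {x y : A} {m : ℤ} (h : y * x = qpow (2 * m) • (x * y)) (s : ℕ) :
    (x * y) ^ s = qpow (m * s * (s - 1)) • (x ^ s * y ^ s) := by
  induction s with
  | zero => simp [qpow_zero']
  | succ n ih =>
    calc (x * y) ^ (n + 1) = (qpow (m * n * (n - 1)) • (x ^ n * y ^ n)) * (x * y) := by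
            rw [pow_succ, ih]
      _ = qpow (m * n * (n - 1)) • (x ^ n * ((y ^ n * x) * y)) := by
            rw [smul_mul_assoc]; congr 1; noncomm_ring
      _ = qpow (m * n * (n - 1)) • (x ^ n * ((qpow (n * (2 * m)) • (x * y ^ n)) * y)) := by
            rw [comm_pow_left h n]
      _ = (qpow (m * n * (n - 1)) * qpow (n * (2 * m))) • ((x ^ n * x) * (y ^ n * y)) := by
            rw [smul_mul_assoc, mul_smul_comm, smul_smul]; congr 1; noncomm_ring
      _ = qpow (m * (n + 1 : ℕ) * ((n + 1 : ℕ) - 1)) • (x ^ (n + 1) * y ^ (n + 1)) := by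
            rw [← pow_succ, ← pow_succ, ← qpow_add']; congr 2; push_cast; ring

end Generic

section BLemmas

variable {I : Type} [DecidableEq I] (C : CartanData I) (J : Set I) [DecidablePred (· ∈ J)]

lemma brel {a b : FA I} (h : BRel C J a b) : bMk C J a = bMk C J b :=
  RingQuot.mkAlgHom_rel KK h

lemma bTtinv (i : I) : bT C J i * bTinv C J i = 1 := by
  simpa [bT, bTinv, map_mul, map_one] using brel C J (BRel.t_tinv i)

lemma bTinvT (i : I) : bTinv C J i * bT C J i = 1 := by
  simpa [bT, bTinv, map_mul, map_one] using brel C J (BRel.tinv_t i)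

lemma bTT (i j : I) : bT C J i * bT C J j = bT C J j * bT C J i := by
  simpa [bT, map_mul] using brel C J (BRel.t_t i j)

lemma bTTinv_comm (i j : I) : bT C J i * bTinv C J j = bTinv C J j * bT C J i := by
  simpa [bT, bTinv, map_mul] using brel C J (BRel.t_tinv_comm i j)

lemma tE (i j : I) : bT C J i * bE C J j = qpow (C.d i * C.a i j) • (bE C J j * bT C J i) := by
  simpa [bT, bE, map_mul, map_smul] using brel C J (BRel.t_e i j)

lemma tF (i j : I) :
    bT C J i * bF C J j = qpow (-(C.d i * C.a i j)) • (bF C J j * bT C J i) := by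
  simpa [bT, bF, map_mul, map_smul] using brel C J (BRel.t_f i j)

lemma eTinv (i j : I) :
    bE C J j * bTinv C J i = qpow (C.d i * C.a i j) • (bTinv C J i * bE C J j) :=
  conj_comm (bTtinv C J i) (bTinvT C J i) (tE C J i j)

lemma fTinv (i j : I) :
    bF C J j * bTinv C J i = qpow (-(C.d i * C.a i j)) • (bTinv C J i * bF C J j) :=
  conj_comm (bTtinv C J i) (bTinvT C J i) (tF C J i j)

lemma bTinvTinv (i j : I) : bTinv C J i * bTinv C J j = bTinv C J j * bTinv C J i := by
  have h : bT C J j * bTinv C J i = (1 : KK) • (bTinv C J i * bT C J j) := by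
    rw [one_smul]; exact bTTinv_comm C J j i
  simpa [one_smul] using conj_comm (bTtinv C J j) (bTinvT C J j) h

lemma efmem (i j : I) (hi : i ∈ J) :
    bE C J i * bF C J j - bF C J j * bE C J i =
      if i = j then (qpow (C.d i) - qpow (-C.d i))⁻¹ • (bT C J i - bTinv C J i) else 0 := by
  simpa [bE, bF, bT, bTinv, map_mul, map_sub, map_smul, apply_ite (bMk C J)] using
    brel C J (BRel.e_f_mem i j hi)

lemma efnot (i j : I) (hi : i ∉ J) :
    bE C J i * bF C J j =
      qpow (-(C.d i * C.a i j)) • (bF C J j * bE C J i) + (if i = j then 1 else 0) := by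
  simpa [bE, bF, map_mul, map_add, map_smul, map_one, apply_ite (bMk C J)] using
    brel C J (BRel.e_f_not i j hi)

lemma serreF_image (i j : I) (hij : i ≠ j) :
    ∑ s ∈ Finset.range ((1 - C.a i j).toNat + 1),
      (((-1 : KK) ^ s * (qfact (C.d i) s)⁻¹ * (qfact (C.d i) ((1 - C.a i j).toNat - s))⁻¹) •
        (bF C J i ^ s * bF C J j * bF C J i ^ ((1 - C.a i j).toNat - s))) = 0 := by
  have h := brel C J (BRel.serre_f i j hij)
  rw [serreF, map_sum, map_zero] at h
  rw [← h]
  refine Finset.sum_congr rfl fun s _ => ?_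
  simp [fdp, bF, map_smul, map_mul, map_pow, smul_smul, smul_mul_assoc, mul_smul_comm,
    mul_comm, mul_left_comm, mul_assoc]

lemma serreEB_image (i j : I) (hij : i ≠ j) :
    ∑ s ∈ Finset.range ((1 - C.a i j).toNat + 1),
      (((-1 : KK) ^ s *
          qpow (C.d i *
            (if i ∉ J ∧ j ∈ J then (1 - C.a i j - (s : ℤ)) * C.a i j
             else if i ∈ J ∧ j ∉ J then (s : ℤ) * C.a i j
             else 0)) *
          (qfact (C.d i) s)⁻¹ * (qfact (C.d i) ((1 - C.a i j).toNat - s))⁻¹) •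
        (bE C J i ^ s * bE C J j * bE C J i ^ ((1 - C.a i j).toNat - s))) = 0 := by
  have h := brel C J (BRel.serre_e i j hij)
  rw [serreEB, map_sum, map_zero] at h
  rw [← h]
  refine Finset.sum_congr rfl fun s _ => ?_
  simp [edp, bE, map_smul, map_mul, map_pow, smul_smul, smul_mul_assoc, mul_smul_comm,
    mul_comm, mul_left_comm, mul_assoc]

end BLemmas

lemma neg_pow_sub {s N : ℕ} (h : s ≤ N) : (-1 : KK) ^ (N - s) = (-1) ^ N * (-1) ^ s := by
  have h2 : (-1 : KK) ^ s * (-1) ^ s = 1 := by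
    rw [← pow_add, ← two_mul, pow_mul]; norm_num
  have h1 : (-1 : KK) ^ (N - s) * ((-1) ^ s * (-1) ^ s) = (-1) ^ N * (-1) ^ s := by
    rw [← mul_assoc, ← pow_add, Nat.sub_add_cancel h]
  rwa [h2, mul_one] at h1

section Psi

variable {I : Type} [DecidableEq I] (C : CartanData I) (J : Set I) [DecidablePred (· ∈ J)]

/-- images of the generators under the anti-involution -/
def psiGen : QGen I → BqJ C J
  | QGen.e i => if i ∈ J then bTinv C J i * bF C J i else bF C J i
  | QGen.f i => if i ∈ J then bE C J i * bT C J i else bE C J i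
  | QGen.t i => bT C J i
  | QGen.tinv i => bTinv C J i

def psiFA : FA I →ₐ[KK] (BqJ C J)ᵐᵒᵖ :=
  FreeAlgebra.lift KK fun g => MulOpposite.op (psiGen C J g)

/-- the anti-homomorphism from the free algebra -/
def pp : FA I → BqJ C J := fun x => (psiFA C J x).unop

lemma pp_mul (x y : FA I) : pp C J (x * y) = pp C J y * pp C J x := by
  simp [pp, map_mul]

lemma pp_add (x y : FA I) : pp C J (x + y) = pp C J x + pp C J y := by
  simp [pp, map_add]

lemma pp_sub (x y : FA I) : pp C J (x - y) = pp C J x - pp C J y := by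
  simp [pp, map_sub]

lemma pp_smul (c : KK) (x : FA I) : pp C J (c • x) = c • pp C J x := by
  simp [pp, map_smul]

lemma pp_one : pp C J 1 = 1 := by simp [pp, map_one]

lemma pp_zero : pp C J 0 = 0 := by simp [pp, map_zero]

lemma pp_pow (x : FA I) (n : ℕ) : pp C J (x ^ n) = pp C J x ^ n := by
  simp [pp, map_pow]

lemma pp_sum {σ : Type} (t : Finset σ) (f : σ → FA I) :
    pp C J (∑ s ∈ t, f s) = ∑ s ∈ t, pp C J (f s) := by
  simp [pp, map_sum]

/-- torus factor accompanying `f` images -/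
def Wt (i : I) : BqJ C J := if i ∈ J then bT C J i else 1

/-- torus factor accompanying `e` images -/
def Vt (i : I) : BqJ C J := if i ∈ J then bTinv C J i else 1

def nuJ (i : I) : ℤ := if i ∈ J then C.d i else 0

def muJ (i j : I) : ℤ := if i ∈ J then C.d i * C.a i j else 0

lemma pp_e (i : I) : pp C J (ge i) = Vt C J i * bF C J i := by
  by_cases h : i ∈ J <;>
    simp [pp, psiFA, ge, FreeAlgebra.lift_ι_apply, psiGen, Vt, h]

lemma pp_f (i : I) : pp C J (gf i) = bE C J i * Wt C J i := by
  by_cases h : i ∈ J <;>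
    simp [pp, psiFA, gf, FreeAlgebra.lift_ι_apply, psiGen, Wt, h]

lemma pp_t (i : I) : pp C J (gT i) = bT C J i := by
  simp [pp, psiFA, gT, FreeAlgebra.lift_ι_apply, psiGen]

lemma pp_tinv (i : I) : pp C J (gTinv i) = bTinv C J i := by
  simp [pp, psiFA, gTinv, FreeAlgebra.lift_ι_apply, psiGen]

lemma mu_diag (k : I) : muJ C J k k = 2 * nuJ C J k := by
  by_cases h : k ∈ J <;> simp [muJ, nuJ, h, C.a_diag] <;> ring

lemma WE (k l : I) : Wt C J k * bE C J l = qpow (muJ C J k l) • (bE C J l * Wt C J k) := by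
  by_cases h : k ∈ J
  · simpa [Wt, muJ, h] using tE C J k l
  · simp [Wt, muJ, h, qpow_zero']

lemma FV (k l : I) : bF C J l * Vt C J k = qpow (-muJ C J k l) • (Vt C J k * bF C J l) := by
  by_cases h : k ∈ J
  · simpa [Vt, muJ, h] using fTinv C J k l
  · simp [Vt, muJ, h, qpow_zero']

lemma Wt_comm (i j : I) : Wt C J i * Wt C J j = Wt C J j * Wt C J i := by
  by_cases hi : i ∈ J <;> by_cases hj : j ∈ J <;> simp [Wt, hi, hj]
  exact bTT C J i j

lemma Vt_comm (i j : I) : Vt C J i * Vt C J j = Vt C J j * Vt C J i := by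
  by_cases hi : i ∈ J <;> by_cases hj : j ∈ J <;> simp [Vt, hi, hj]
  exact bTinvTinv C J i j

lemma Wt_pow_comm (i j : I) (m : ℕ) : Wt C J j * Wt C J i ^ m = Wt C J i ^ m * Wt C J j :=
  (Commute.pow_right (Wt_comm C J j i) m)

lemma Vt_pow_comm (i j : I) (m : ℕ) : Vt C J j * Vt C J i ^ m = Vt C J i ^ m * Vt C J j :=
  (Commute.pow_right (Vt_comm C J j i) m)

lemma WsE (k l : I) (s : ℕ) :
    Wt C J k ^ s * bE C J l = qpow (s * muJ C J k l) • (bE C J l * Wt C J k ^ s) :=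
  comm_pow_left (WE C J k l) s

lemma WEm (k l : I) (m : ℕ) :
    Wt C J k * bE C J l ^ m = qpow (m * muJ C J k l) • (bE C J l ^ m * Wt C J k) := by
  have := comm_pow (WE C J k l) 1 m
  simpa using this

lemma WsEm (k l : I) (s m : ℕ) :
    Wt C J k ^ s * bE C J l ^ m =
      qpow (s * m * muJ C J k l) • (bE C J l ^ m * Wt C J k ^ s) :=
  comm_pow (WE C J k l) s m

lemma FsV (k l : I) (s : ℕ) :
    bF C J l ^ s * Vt C J k = qpow (s * -muJ C J k l) • (Vt C J k * bF C J l ^ s) :=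
  comm_pow_left (FV C J k l) s

lemma FVm (k l : I) (m : ℕ) :
    bF C J l * Vt C J k ^ m = qpow (m * -muJ C J k l) • (Vt C J k ^ m * bF C J l) := by
  have := comm_pow (FV C J k l) 1 m
  simpa using this

lemma FsVm (k l : I) (s m : ℕ) :
    bF C J l ^ s * Vt C J k ^ m =
      qpow (s * m * -muJ C J k l) • (Vt C J k ^ m * bF C J l ^ s) :=
  comm_pow (FV C J k l) s m

end Psi

section Words

variable {I : Type} [DecidableEq I] (C : CartanData I) (J : Set I) [DecidablePred (· ∈ J)]

lemma fword (i j : I) (s m : ℕ) :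
    (bE C J i * Wt C J i) ^ s * (bE C J j * Wt C J j) * (bE C J i * Wt C J i) ^ m =
      qpow (nuJ C J i * (s * (s - 1) + m * (m - 1) + 2 * s * m) +
          s * muJ C J i j + m * muJ C J j i) •
        ((bE C J i ^ s * bE C J j * bE C J i ^ m) * (Wt C J i ^ (s + m) * Wt C J j)) := by
  have hWE : Wt C J i * bE C J i = qpow (2 * nuJ C J i) • (bE C J i * Wt C J i) := by
    rw [← mu_diag]; exact WE C J i i
  have hword : (bE C J i ^ s * Wt C J i ^ s) * (bE C J j * Wt C J j) *
        (bE C J i ^ m * Wt C J i ^ m) =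
      qpow ((s : ℤ) * muJ C J i j + (m : ℤ) * muJ C J j i + (s : ℤ) * m * muJ C J i i) •
        ((bE C J i ^ s * bE C J j * bE C J i ^ m) * (Wt C J i ^ (s + m) * Wt C J j)) := by
    calc (bE C J i ^ s * Wt C J i ^ s) * (bE C J j * Wt C J j) *
          (bE C J i ^ m * Wt C J i ^ m)
        = bE C J i ^ s * ((Wt C J i ^ s * bE C J j) *
            ((Wt C J j * bE C J i ^ m) * Wt C J i ^ m)) := by
          simp only [mul_assoc]
      _ = bE C J i ^ s * ((qpow ((s : ℤ) * muJ C J i j) • (bE C J j * Wt C J i ^ s)) *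
            ((qpow ((m : ℤ) * muJ C J j i) • (bE C J i ^ m * Wt C J j)) * Wt C J i ^ m)) := by
          rw [WsE, WEm]
      _ = (qpow ((s : ℤ) * muJ C J i j) * qpow ((m : ℤ) * muJ C J j i)) •
            (bE C J i ^ s * (bE C J j * ((Wt C J i ^ s * bE C J i ^ m) *
              (Wt C J j * Wt C J i ^ m)))) := by
          simp only [smul_mul_assoc, mul_smul_comm, smul_smul]
          congr 1 <;> first | ring1 | simp only [mul_assoc]
      _ = (qpow ((s : ℤ) * muJ C J i j) * qpow ((m : ℤ) * muJ C J j i) *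
            qpow ((s : ℤ) * m * muJ C J i i)) •
            (bE C J i ^ s * (bE C J j * (bE C J i ^ m * (Wt C J i ^ s *
              (Wt C J i ^ m * Wt C J j))))) := by
          rw [WsEm, Wt_pow_comm]
          simp only [smul_mul_assoc, mul_smul_comm, smul_smul]
          congr 1 <;> first | ring1 | simp only [mul_assoc]
      _ = qpow ((s : ℤ) * muJ C J i j + (m : ℤ) * muJ C J j i + (s : ℤ) * m * muJ C J i i) •
            ((bE C J i ^ s * bE C J j * bE C J i ^ m) * (Wt C J i ^ (s + m) * Wt C J j)) := by
          rw [← qpow_add', ← qpow_add', pow_add]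
          congr 1
          simp only [mul_assoc]
  rw [prod_pow hWE s, prod_pow hWE m]
  simp only [smul_mul_assoc, mul_smul_comm, smul_smul]
  rw [hword, smul_smul]
  simp only [← qpow_add']
  congr 2
  rw [mu_diag]
  push_cast
  ring

lemma eword (i j : I) (s m : ℕ) :
    (Vt C J i * bF C J i) ^ s * (Vt C J j * bF C J j) * (Vt C J i * bF C J i) ^ m =
      qpow (-(nuJ C J i * (s * (s - 1) + m * (m - 1) + 2 * s * m) +
          s * muJ C J j i + m * muJ C J i j)) •
        ((Vt C J i ^ (s + m) * Vt C J j) * (bF C J i ^ s * bF C J j * bF C J i ^ m)) := by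
  have hVF : bF C J i * Vt C J i = qpow (2 * -nuJ C J i) • (Vt C J i * bF C J i) := by
    have h := FV C J i i
    rw [mu_diag] at h
    convert h using 2
    ring
  have hword : (Vt C J i ^ s * bF C J i ^ s) * (Vt C J j * bF C J j) *
        (Vt C J i ^ m * bF C J i ^ m) =
      qpow ((s : ℤ) * -muJ C J j i + (m : ℤ) * -muJ C J i j + (s : ℤ) * m * -muJ C J i i) •
        ((Vt C J i ^ (s + m) * Vt C J j) * (bF C J i ^ s * bF C J j * bF C J i ^ m)) := by
    calc (Vt C J i ^ s * bF C J i ^ s) * (Vt C J j * bF C J j) *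
          (Vt C J i ^ m * bF C J i ^ m)
        = Vt C J i ^ s * ((bF C J i ^ s * Vt C J j) *
            ((bF C J j * Vt C J i ^ m) * bF C J i ^ m)) := by
          simp only [mul_assoc]
      _ = Vt C J i ^ s * ((qpow ((s : ℤ) * -muJ C J j i) • (Vt C J j * bF C J i ^ s)) *
            ((qpow ((m : ℤ) * -muJ C J i j) • (Vt C J i ^ m * bF C J j)) * bF C J i ^ m)) := by
          rw [FsV, FVm]
      _ = (qpow ((s : ℤ) * -muJ C J j i) * qpow ((m : ℤ) * -muJ C J i j)) •
            (Vt C J i ^ s * (Vt C J j * ((bF C J i ^ s * Vt C J i ^ m) *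
              (bF C J j * bF C J i ^ m)))) := by
          simp only [smul_mul_assoc, mul_smul_comm, smul_smul]
          congr 1 <;> first | ring1 | simp only [mul_assoc]
      _ = (qpow ((s : ℤ) * -muJ C J j i) * qpow ((m : ℤ) * -muJ C J i j) *
            qpow ((s : ℤ) * m * -muJ C J i i)) •
            (Vt C J i ^ s * (Vt C J j * (Vt C J i ^ m * (bF C J i ^ s *
              (bF C J j * bF C J i ^ m))))) := by
          rw [FsVm]
          simp only [smul_mul_assoc, mul_smul_comm, smul_smul]
          congr 1 <;> first | ring1 | simp only [mul_assoc]
      _ = qpow ((s : ℤ) * -muJ C J j i + (m : ℤ) * -muJ C J i j + (s : ℤ) * m * -muJ C J i i) •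
            ((Vt C J i ^ (s + m) * Vt C J j) * (bF C J i ^ s * bF C J j * bF C J i ^ m)) := by
          rw [← qpow_add', ← qpow_add', pow_add]
          congr 1
          have hswap : ∀ X : BqJ C J,
              Vt C J j * (Vt C J i ^ m * X) = Vt C J i ^ m * (Vt C J j * X) := by
            intro X; rw [← mul_assoc, Vt_pow_comm, mul_assoc]
          simp only [mul_assoc]
          rw [hswap]
  rw [prod_pow hVF s, prod_pow hVF m]
  simp only [smul_mul_assoc, mul_smul_comm, smul_smul]
  rw [hword, smul_smul]
  simp only [← qpow_add']
  congr 2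
  rw [mu_diag]
  push_cast
  ring

end Words

section SerreComp

variable {I : Type} [DecidableEq I] (C : CartanData I) (J : Set I) [DecidablePred (· ∈ J)]

lemma psi_serreF (i j : I) (hij : i ≠ j) : pp C J (serreF C i j) = 0 := by
  have haij : C.a i j ≤ 0 := C.a_offdiag i j hij
  rw [serreF, pp_sum]
  set N := (1 - C.a i j).toNat with hNdef
  have hN : (N : ℤ) = 1 - C.a i j := by rw [hNdef]; exact Int.toNat_of_nonneg (by omega)
  have hsummand : ∀ s, pp C J ((-1 : KK) ^ s • (fdp C i s * gf j * fdp C i (N - s))) =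
      (-1 : KK) ^ s • (((qfact (C.d i) (N - s))⁻¹ * (qfact (C.d i) s)⁻¹) •
        ((bE C J i * Wt C J i) ^ (N - s) * (bE C J j * Wt C J j) *
          (bE C J i * Wt C J i) ^ s)) := by
    intro s
    rw [pp_smul, pp_mul, pp_mul, pp_f]
    simp only [fdp, pp_smul, pp_pow, pp_f]
    simp only [smul_mul_assoc, mul_smul_comm, smul_smul]
    congr 1 <;> first | ring1 | simp only [mul_assoc]
  simp only [hsummand]
  rw [← Finset.sum_range_reflect]
  simp only [Nat.add_sub_cancel]
  have key : ∀ s ∈ Finset.range (N + 1),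
      (-1 : KK) ^ (N - s) • (((qfact (C.d i) (N - (N - s)))⁻¹ * (qfact (C.d i) (N - s))⁻¹) •
        ((bE C J i * Wt C J i) ^ (N - (N - s)) * (bE C J j * Wt C J j) *
          (bE C J i * Wt C J i) ^ (N - s)))
      = ((-1 : KK) ^ N * qpow (if i ∈ J ∧ j ∉ J then C.d i * (N * (N - 1)) else 0)) •
          ((((-1 : KK) ^ s *
              qpow (C.d i *
                (if i ∉ J ∧ j ∈ J then (1 - C.a i j - (s : ℤ)) * C.a i j
                 else if i ∈ J ∧ j ∉ J then (s : ℤ) * C.a i j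
                 else 0)) *
              (qfact (C.d i) s)⁻¹ * (qfact (C.d i) (N - s))⁻¹) •
            (bE C J i ^ s * bE C J j * bE C J i ^ (N - s))) * (Wt C J i ^ N * Wt C J j)) := by
    intro s hs
    have hsle : s ≤ N := Nat.lt_succ_iff.mp (Finset.mem_range.mp hs)
    rw [Nat.sub_sub_self hsle, neg_pow_sub hsle]
    rw [fword C J i j s (N - s)]
    have hsm : s + (N - s) = N := by omega
    rw [hsm]
    have hmz : ((N - s : ℕ) : ℤ) = (N : ℤ) - (s : ℤ) := by omega
    have ha : C.a i j = 1 - (N : ℤ) := by omega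
    have hcomb : qpow (nuJ C J i * (s * (s - 1) + (N - s : ℕ) * ((N - s : ℕ) - 1) +
          2 * s * (N - s : ℕ)) + s * muJ C J i j + (N - s : ℕ) * muJ C J j i)
        = qpow (if i ∈ J ∧ j ∉ J then C.d i * (N * (N - 1)) else 0) *
          qpow (C.d i *
            (if i ∉ J ∧ j ∈ J then (1 - C.a i j - (s : ℤ)) * C.a i j
             else if i ∈ J ∧ j ∉ J then (s : ℤ) * C.a i j
             else 0)) := by
      rw [← qpow_add']
      congr 1
      by_cases hi : i ∈ J <;> by_cases hj : j ∈ J <;>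
        simp only [nuJ, muJ, hi, hj, if_true, if_false, and_true, and_false, true_and,
          false_and, not_true_eq_false, not_false_eq_true, ite_true, ite_false] <;>
        (try rw [← C.symm i j]) <;> (try simp only [hmz, ha]) <;> ring
    simp only [smul_mul_assoc, mul_smul_comm, smul_smul]
    congr 1
    linear_combination ((-1 : KK) ^ N * (-1 : KK) ^ s * (qfact (C.d i) s)⁻¹ *
      (qfact (C.d i) (N - s))⁻¹) * hcomb
  rw [Finset.sum_congr rfl key, ← Finset.smul_sum, ← Finset.sum_mul]
  have him := serreEB_image C J i j hij
  rw [← hNdef] at him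
  rw [him, zero_mul, smul_zero]

lemma psi_serreEB (i j : I) (hij : i ≠ j) : pp C J (serreEB C J i j) = 0 := by
  have haij : C.a i j ≤ 0 := C.a_offdiag i j hij
  rw [serreEB, pp_sum]
  set N := (1 - C.a i j).toNat with hNdef
  have hN : (N : ℤ) = 1 - C.a i j := by rw [hNdef]; exact Int.toNat_of_nonneg (by omega)
  have hsummand : ∀ s : ℕ, pp C J (((-1 : KK) ^ s *
        qpow (C.d i *
          (if i ∉ J ∧ j ∈ J then (1 - C.a i j - (s : ℤ)) * C.a i j
           else if i ∈ J ∧ j ∉ J then (s : ℤ) * C.a i j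
           else 0))) • (edp C i s * ge j * edp C i (N - s))) =
      ((-1 : KK) ^ s *
        qpow (C.d i *
          (if i ∉ J ∧ j ∈ J then (1 - C.a i j - (s : ℤ)) * C.a i j
           else if i ∈ J ∧ j ∉ J then (s : ℤ) * C.a i j
           else 0))) • (((qfact (C.d i) (N - s))⁻¹ * (qfact (C.d i) s)⁻¹) •
        ((Vt C J i * bF C J i) ^ (N - s) * (Vt C J j * bF C J j) *
          (Vt C J i * bF C J i) ^ s)) := by
    intro s
    rw [pp_smul, pp_mul, pp_mul, pp_e]
    simp only [edp, pp_smul, pp_pow, pp_e]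
    simp only [smul_mul_assoc, mul_smul_comm, smul_smul]
    congr 1 <;> first | ring1 | simp only [mul_assoc]
  simp only [hsummand]
  rw [← Finset.sum_range_reflect]
  simp only [Nat.add_sub_cancel]
  have key : ∀ s ∈ Finset.range (N + 1),
      ((-1 : KK) ^ (N - s) *
        qpow (C.d i *
          (if i ∉ J ∧ j ∈ J then (1 - C.a i j - ((N - s : ℕ) : ℤ)) * C.a i j
           else if i ∈ J ∧ j ∉ J then ((N - s : ℕ) : ℤ) * C.a i j
           else 0))) • (((qfact (C.d i) (N - (N - s)))⁻¹ * (qfact (C.d i) (N - s))⁻¹) •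
        ((Vt C J i * bF C J i) ^ (N - (N - s)) * (Vt C J j * bF C J j) *
          (Vt C J i * bF C J i) ^ (N - s)))
      = ((-1 : KK) ^ N * qpow (if i ∈ J ∧ j ∉ J then -(C.d i * (N * (N - 1))) else 0)) •
          ((Vt C J i ^ N * Vt C J j) *
            ((((-1 : KK) ^ s * (qfact (C.d i) s)⁻¹ * (qfact (C.d i) (N - s))⁻¹) •
              (bF C J i ^ s * bF C J j * bF C J i ^ (N - s))))) := by
    intro s hs
    have hsle : s ≤ N := Nat.lt_succ_iff.mp (Finset.mem_range.mp hs)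
    rw [Nat.sub_sub_self hsle, neg_pow_sub hsle]
    rw [eword C J i j s (N - s)]
    have hsm : s + (N - s) = N := by omega
    rw [hsm]
    have hmz : ((N - s : ℕ) : ℤ) = (N : ℤ) - (s : ℤ) := by omega
    have ha : C.a i j = 1 - (N : ℤ) := by omega
    have hcomb : qpow (C.d i *
          (if i ∉ J ∧ j ∈ J then (1 - C.a i j - ((N - s : ℕ) : ℤ)) * C.a i j
           else if i ∈ J ∧ j ∉ J then ((N - s : ℕ) : ℤ) * C.a i j
           else 0)) *
        qpow (-(nuJ C J i * (s * (s - 1) + (N - s : ℕ) * ((N - s : ℕ) - 1) +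
          2 * s * (N - s : ℕ)) + s * muJ C J j i + (N - s : ℕ) * muJ C J i j))
        = qpow (if i ∈ J ∧ j ∉ J then -(C.d i * (N * (N - 1))) else 0) := by
      rw [← qpow_add']
      congr 1
      by_cases hi : i ∈ J <;> by_cases hj : j ∈ J <;>
        simp only [nuJ, muJ, hi, hj, if_true, if_false, and_true, and_false, true_and,
          false_and, not_true_eq_false, not_false_eq_true, ite_true, ite_false] <;>
        (try rw [← C.symm i j]) <;> (try simp only [hmz, ha]) <;> ring
    simp only [smul_mul_assoc, mul_smul_comm, smul_smul]
    congr 1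
    linear_combination ((-1 : KK) ^ N * (-1 : KK) ^ s * (qfact (C.d i) s)⁻¹ *
      (qfact (C.d i) (N - s))⁻¹) * hcomb
  rw [Finset.sum_congr rfl key, ← Finset.smul_sum, ← Finset.mul_sum]
  have him := serreF_image C J i j hij
  rw [← hNdef] at him
  rw [him, mul_zero, smul_zero]

end SerreComp

section Rel

variable {I : Type} [DecidableEq I] (C : CartanData I) (J : Set I) [DecidablePred (· ∈ J)]

lemma T_psie (i j : I) : bT C J i * (Vt C J j * bF C J j) =
    qpow (-(C.d i * C.a i j)) • ((Vt C J j * bF C J j) * bT C J i) := by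
  by_cases hj : j ∈ J
  · simp only [Vt, if_pos hj]
    calc bT C J i * (bTinv C J j * bF C J j)
        = bTinv C J j * (bT C J i * bF C J j) := by
          rw [← mul_assoc, bTTinv_comm, mul_assoc]
      _ = bTinv C J j * (qpow (-(C.d i * C.a i j)) • (bF C J j * bT C J i)) := by rw [tF]
      _ = qpow (-(C.d i * C.a i j)) • ((bTinv C J j * bF C J j) * bT C J i) := by
          rw [mul_smul_comm, ← mul_assoc]
  · simp only [Vt, if_neg hj, one_mul]
    exact tF C J i j

lemma T_psif (i j : I) : bT C J i * (bE C J j * Wt C J j) =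
    qpow (C.d i * C.a i j) • ((bE C J j * Wt C J j) * bT C J i) := by
  by_cases hj : j ∈ J
  · simp only [Wt, if_pos hj]
    calc bT C J i * (bE C J j * bT C J j)
        = (bT C J i * bE C J j) * bT C J j := by rw [← mul_assoc]
      _ = (qpow (C.d i * C.a i j) • (bE C J j * bT C J i)) * bT C J j := by rw [tE]
      _ = qpow (C.d i * C.a i j) • (bE C J j * (bT C J i * bT C J j)) := by
          rw [smul_mul_assoc, mul_assoc]
      _ = qpow (C.d i * C.a i j) • (bE C J j * (bT C J j * bT C J i)) := by rw [bTT]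
      _ = qpow (C.d i * C.a i j) • ((bE C J j * bT C J j) * bT C J i) := by rw [← mul_assoc]
  · simp only [Wt, if_neg hj, mul_one]
    exact tE C J i j

theorem psi_rel {x y : FA I} (h : BRel C J x y) : psiFA C J x = psiFA C J y := by
  apply MulOpposite.unop_injective
  show pp C J x = pp C J y
  induction h with
  | t_tinv i => rw [pp_mul, pp_t, pp_tinv, pp_one]; exact bTinvT C J i
  | tinv_t i => rw [pp_mul, pp_t, pp_tinv, pp_one]; exact bTtinv C J i
  | t_t i j => rw [pp_mul, pp_mul, pp_t, pp_t]; exact bTT C J j i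
  | t_tinv_comm i j =>
      rw [pp_mul, pp_mul, pp_t, pp_tinv]; exact (bTTinv_comm C J i j).symm
  | t_e i j =>
      rw [pp_mul, pp_smul, pp_mul, pp_t, pp_e]
      have := flip_comm (T_psie C J i j)
      simpa using this
  | t_f i j =>
      rw [pp_mul, pp_smul, pp_mul, pp_t, pp_f]
      have := flip_comm (T_psif C J i j)
      simpa using this
  | e_f_mem i j hi =>
      by_cases hij : i = j
      · subst hij
        rw [if_pos rfl, pp_sub, pp_mul, pp_mul, pp_e, pp_f, pp_smul, pp_sub, pp_t, pp_tinv]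
        simp only [Vt, Wt, if_pos hi]
        have h1 : (bE C J i * bT C J i) * (bTinv C J i * bF C J i) = bE C J i * bF C J i := by
          rw [mul_assoc, ← mul_assoc (bT C J i), bTtinv, one_mul]
        have hef := efmem C J i i hi
        rw [if_pos rfl] at hef
        have hFE : bF C J i * bE C J i = bE C J i * bF C J i -
            (qpow (C.d i) - qpow (-C.d i))⁻¹ • (bT C J i - bTinv C J i) := by
          rw [← hef]; abel
        have hET : bTinv C J i * bE C J i =
            qpow (-(C.d i * C.a i i)) • (bE C J i * bTinv C J i) := flip_comm (eTinv C J i i)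
        have hFT : bF C J i * bT C J i =
            qpow (-(-(C.d i * C.a i i))) • (bT C J i * bF C J i) := flip_comm (tF C J i i)
        have piece1 : bTinv C J i * (bE C J i * bF C J i * bT C J i) =
            bE C J i * bF C J i := by
          calc bTinv C J i * (bE C J i * bF C J i * bT C J i)
              = bTinv C J i * (bE C J i * (qpow (-(-(C.d i * C.a i i))) •
                  (bT C J i * bF C J i))) := by rw [mul_assoc (bE C J i), hFT]
            _ = qpow (-(-(C.d i * C.a i i))) • ((bTinv C J i * bE C J i) *
                  (bT C J i * bF C J i)) := by
                rw [mul_smul_comm, mul_smul_comm, ← mul_assoc]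
            _ = qpow (-(-(C.d i * C.a i i))) • ((qpow (-(C.d i * C.a i i)) •
                  (bE C J i * bTinv C J i)) * (bT C J i * bF C J i)) := by rw [hET]
            _ = (qpow (-(-(C.d i * C.a i i))) * qpow (-(C.d i * C.a i i))) •
                  (bE C J i * ((bTinv C J i * bT C J i) * bF C J i)) := by
                rw [smul_mul_assoc, smul_smul]
                congr 1
                simp only [mul_assoc]
            _ = bE C J i * bF C J i := by
                rw [bTinvT, one_mul, ← qpow_add',
                  show -(-(C.d i * C.a i i)) + -(C.d i * C.a i i) = 0 from by ring,
                  qpow_zero', one_smul]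
        have piece2 : bTinv C J i * ((bT C J i - bTinv C J i) * bT C J i) =
            bT C J i - bTinv C J i := by
          rw [sub_mul, mul_sub]
          have p1 : bTinv C J i * (bT C J i * bT C J i) = bT C J i := by
            rw [← mul_assoc, bTinvT, one_mul]
          have p2 : bTinv C J i * (bTinv C J i * bT C J i) = bTinv C J i := by
            rw [bTinvT, mul_one]
          rw [p1, p2]
        have h2 : (bTinv C J i * bF C J i) * (bE C J i * bT C J i) =
            bE C J i * bF C J i -
              (qpow (C.d i) - qpow (-C.d i))⁻¹ • (bT C J i - bTinv C J i) := by
          calc (bTinv C J i * bF C J i) * (bE C J i * bT C J i)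
              = bTinv C J i * ((bF C J i * bE C J i) * bT C J i) := by
                simp only [mul_assoc]
            _ = bTinv C J i * ((bE C J i * bF C J i -
                  (qpow (C.d i) - qpow (-C.d i))⁻¹ • (bT C J i - bTinv C J i)) *
                  bT C J i) := by rw [hFE]
            _ = bTinv C J i * (bE C J i * bF C J i * bT C J i) -
                  bTinv C J i * (((qpow (C.d i) - qpow (-C.d i))⁻¹ •
                    (bT C J i - bTinv C J i)) * bT C J i) := by
                rw [sub_mul, mul_sub]
            _ = bE C J i * bF C J i -
                  (qpow (C.d i) - qpow (-C.d i))⁻¹ • (bT C J i - bTinv C J i) := by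
                rw [piece1, smul_mul_assoc, mul_smul_comm, piece2]
        rw [h1, h2, sub_sub_cancel]
      · rw [if_neg hij, pp_sub, pp_mul, pp_mul, pp_e, pp_f, pp_zero, sub_eq_zero]
        simp only [Vt, if_pos hi]
        by_cases hj : j ∈ J
        · simp only [Wt, if_pos hj]
          have hcomm : bE C J j * bF C J i = bF C J i * bE C J j := by
            have h := efmem C J j i hj
            rw [if_neg (Ne.symm hij)] at h
            exact sub_eq_zero.mp h
          calc (bE C J j * bT C J j) * (bTinv C J i * bF C J i)
              = bE C J j * ((bT C J j * bTinv C J i) * bF C J i) := by simp only [mul_assoc]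
            _ = bE C J j * (bTinv C J i * (bT C J j * bF C J i)) := by
                rw [bTTinv_comm, mul_assoc]
            _ = bE C J j * (bTinv C J i * (qpow (-(C.d j * C.a j i)) •
                  (bF C J i * bT C J j))) := by rw [tF]
            _ = qpow (-(C.d j * C.a j i)) • ((bE C J j * bTinv C J i) *
                  (bF C J i * bT C J j)) := by
                rw [mul_smul_comm, mul_smul_comm, ← mul_assoc]
            _ = qpow (-(C.d j * C.a j i)) • ((qpow (C.d i * C.a i j) •
                  (bTinv C J i * bE C J j)) * (bF C J i * bT C J j)) := by rw [eTinv]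
            _ = (qpow (-(C.d j * C.a j i)) * qpow (C.d i * C.a i j)) •
                  (bTinv C J i * ((bE C J j * bF C J i) * bT C J j)) := by
                rw [smul_mul_assoc, smul_smul]
                congr 1
                simp only [mul_assoc]
            _ = bTinv C J i * ((bF C J i * bE C J j) * bT C J j) := by
                rw [hcomm, ← qpow_add',
                  show -(C.d j * C.a j i) + C.d i * C.a i j = 0 from by
                    have := C.symm i j; omega,
                  qpow_zero', one_smul]
            _ = (bTinv C J i * bF C J i) * (bE C J j * bT C J j) := by
                simp only [mul_assoc]
        · simp only [Wt, if_neg hj, mul_one]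
          have hEF := efnot C J j i hj
          rw [if_neg (Ne.symm hij), add_zero] at hEF
          calc bE C J j * (bTinv C J i * bF C J i)
              = (bE C J j * bTinv C J i) * bF C J i := by rw [← mul_assoc]
            _ = (qpow (C.d i * C.a i j) • (bTinv C J i * bE C J j)) * bF C J i := by
                rw [eTinv]
            _ = qpow (C.d i * C.a i j) • (bTinv C J i * (bE C J j * bF C J i)) := by
                rw [smul_mul_assoc, mul_assoc]
            _ = qpow (C.d i * C.a i j) • (bTinv C J i * (qpow (-(C.d j * C.a j i)) •
                  (bF C J i * bE C J j))) := by rw [hEF]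
            _ = (qpow (C.d i * C.a i j) * qpow (-(C.d j * C.a j i))) •
                  ((bTinv C J i * bF C J i) * bE C J j) := by
                rw [mul_smul_comm, smul_smul, ← mul_assoc]
            _ = (bTinv C J i * bF C J i) * bE C J j := by
                rw [← qpow_add',
                  show C.d i * C.a i j + -(C.d j * C.a j i) = 0 from by
                    have := C.symm i j; omega,
                  qpow_zero', one_smul]
  | e_f_not i j hi =>
      rw [pp_mul, pp_add, pp_smul, pp_mul, pp_e, pp_f]
      simp only [Vt, if_neg hi, one_mul]
      by_cases hij : i = j
      · subst hij
        rw [if_pos rfl, pp_one]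
        have hii : i ∉ J := hi
        simp only [Wt, if_neg hii, mul_one]
        have h := efnot C J i i hi
        rw [if_pos rfl] at h
        exact h
      · rw [if_neg hij, pp_zero, add_zero]
        by_cases hj : j ∈ J
        · simp only [Wt, if_pos hj]
          have hcomm : bE C J j * bF C J i = bF C J i * bE C J j := by
            have h := efmem C J j i hj
            rw [if_neg (Ne.symm hij)] at h
            exact sub_eq_zero.mp h
          calc (bE C J j * bT C J j) * bF C J i
              = bE C J j * (bT C J j * bF C J i) := by rw [mul_assoc]
            _ = bE C J j * (qpow (-(C.d j * C.a j i)) • (bF C J i * bT C J j)) := by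
                rw [tF]
            _ = qpow (-(C.d j * C.a j i)) • ((bE C J j * bF C J i) * bT C J j) := by
                rw [mul_smul_comm, ← mul_assoc]
            _ = qpow (-(C.d j * C.a j i)) • ((bF C J i * bE C J j) * bT C J j) := by
                rw [hcomm]
            _ = qpow (-(C.d i * C.a i j)) • (bF C J i * (bE C J j * bT C J j)) := by
                rw [mul_assoc, show -(C.d j * C.a j i) = -(C.d i * C.a i j) from by
                  have := C.symm i j; omega]
        · simp only [Wt, if_neg hj, mul_one]
          have h := efnot C J j i hj
          rw [if_neg (Ne.symm hij), add_zero] at h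
          rw [h, show -(C.d j * C.a j i) = -(C.d i * C.a i j) from by
            have := C.symm i j; omega]
      | serre_f i j hij => rw [pp_zero]; exact psi_serreF C J i j hij
      | serre_e i j hij => rw [pp_zero]; exact psi_serreEB C J i j hij

end Rel

section Assemble

variable {I : Type} [DecidableEq I] (C : CartanData I) (J : Set I) [DecidablePred (· ∈ J)]

def phiHom : BqJ C J →ₐ[KK] (BqJ C J)ᵐᵒᵖ :=
  RingQuot.liftAlgHom KK ⟨psiFA C J, fun _ _ h => psi_rel C J h⟩

def phi : BqJ C J → BqJ C J := fun a => (phiHom C J a).unop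

lemma phiHom_mk (x : FA I) : phiHom C J (bMk C J x) = psiFA C J x := by
  rw [phiHom, bMk, RingQuot.liftAlgHom_mkAlgHom_apply]

lemma phi_mk (x : FA I) : phi C J (bMk C J x) = pp C J x := by
  rw [phi, phiHom_mk]; rfl

lemma phi_add (a b : BqJ C J) : phi C J (a + b) = phi C J a + phi C J b := by
  simp [phi, map_add]

lemma phi_smul (c : KK) (a : BqJ C J) : phi C J (c • a) = c • phi C J a := by
  simp [phi, map_smul]

lemma phi_mul (a b : BqJ C J) : phi C J (a * b) = phi C J b * phi C J a := by
  simp [phi, map_mul]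

lemma phi_one : phi C J 1 = 1 := by
  simp [phi, map_one]

lemma phi_bE (i : I) : phi C J (bE C J i) = Vt C J i * bF C J i := by
  rw [bE, phi_mk, pp_e]

lemma phi_bF (i : I) : phi C J (bF C J i) = bE C J i * Wt C J i := by
  rw [bF, phi_mk, pp_f]

lemma phi_bT (i : I) : phi C J (bT C J i) = bT C J i := by
  rw [bT, phi_mk, pp_t, bT]

lemma phi_bTinv (i : I) : phi C J (bTinv C J i) = bTinv C J i := by
  rw [bTinv, phi_mk, pp_tinv, bTinv]

lemma phi_phi (a : BqJ C J) : phi C J (phi C J a) = a := by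
  obtain ⟨x, rfl⟩ := RingQuot.mkAlgHom_surjective KK (BRel C J) a
  show phi C J (phi C J (bMk C J x)) = bMk C J x
  induction x using FreeAlgebra.induction with
  | grade0 r =>
      rw [AlgHom.commutes]
      have h1 : phi C J (algebraMap KK (BqJ C J) r) = algebraMap KK (BqJ C J) r := by
        rw [phi, AlgHom.commutes, MulOpposite.algebraMap_apply, MulOpposite.unop_op]
      rw [h1, h1]
  | grade1 g =>
      cases g with
      | e i =>
          show phi C J (phi C J (bE C J i)) = bE C J i
          rw [phi_bE]
          by_cases hi : i ∈ J
          · simp only [Vt, if_pos hi]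
            rw [phi_mul, phi_bF, phi_bTinv]
            simp only [Wt, if_pos hi]
            rw [mul_assoc, bTtinv, mul_one]
          · simp only [Vt, if_neg hi, one_mul]
            rw [phi_bF]
            simp only [Wt, if_neg hi, mul_one]
      | f i =>
          show phi C J (phi C J (bF C J i)) = bF C J i
          rw [phi_bF]
          by_cases hi : i ∈ J
          · simp only [Wt, if_pos hi]
            rw [phi_mul, phi_bE, phi_bT]
            simp only [Vt, if_pos hi]
            rw [← mul_assoc, bTtinv, one_mul]
          · simp only [Wt, if_neg hi, mul_one]
            rw [phi_bE]
            simp only [Vt, if_neg hi, one_mul]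
      | t i =>
          show phi C J (phi C J (bT C J i)) = bT C J i
          rw [phi_bT, phi_bT]
      | tinv i =>
          show phi C J (phi C J (bTinv C J i)) = bTinv C J i
          rw [phi_bTinv, phi_bTinv]
  | mul x y hx hy => rw [map_mul, phi_mul, phi_mul, hx, hy]
  | add x y hx hy => rw [map_add, phi_add, phi_add, hx, hy]

end Assemble
/-- There is a `ℚ(q)`-algebra anti-involution `φ` of the hybrid `q`-Boson algebra
`B_q^J(𝔤)` with `φ(f_i) = e_i` and `φ(e_i) = f_i` for `i ∈ I∖J`, `φ(f_i) = e_i t_i` and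
`φ(e_i) = t_i^{-1} f_i` for `i ∈ J`, and `φ(q^h) = q^h`. -/
theorem qBoson_anti_involution
    (I : Type) [DecidableEq I] (C : CartanData I) (J : Set I) [DecidablePred (· ∈ J)] :
    ∃ φ : BqJ C J → BqJ C J,
      (∀ a b : BqJ C J, φ (a + b) = φ a + φ b) ∧
      (∀ (c : KK) (a : BqJ C J), φ (c • a) = c • φ a) ∧
      (∀ a b : BqJ C J, φ (a * b) = φ b * φ a) ∧
      φ 1 = 1 ∧
      (∀ a : BqJ C J, φ (φ a) = a) ∧
      (∀ i : I, i ∉ J → φ (bF C J i) = bE C J i ∧ φ (bE C J i) = bF C J i) ∧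
      (∀ i : I, i ∈ J →
        φ (bF C J i) = bE C J i * bT C J i ∧ φ (bE C J i) = bTinv C J i * bF C J i) ∧
      (∀ i : I, φ (bT C J i) = bT C J i) ∧
      (∀ i : I, φ (bTinv C J i) = bTinv C J i) := by
  refine ⟨phi C J, phi_add C J, phi_smul C J, phi_mul C J, phi_one C J, phi_phi C J,
    ?_, ?_, phi_bT C J, phi_bTinv C J⟩
  · intro i hi
    constructor
    · rw [phi_bF]; simp [Wt, hi]
    · rw [phi_bE]; simp [Vt, hi]
  · intro i hi
    constructor
    · rw [phi_bF]; simp [Wt, hi]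
    · rw [phi_bE]; simp [Vt, hi]

end
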